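/- Let M ⊆ R^d be a nonempty closed set containing x†, and let C be the cone generated by M − x† (i.e., C = {a(x − x†) : a ≥ 0, x ∈ M}). Suppose P is an ε-approximate projection onto M, meaning P(u) = P_M(u) + e(u) with ‖e(u)‖₂ ≤ ε for all u. Then for any u ∈ R^d: ‖P(u) − x†‖₂ ≤ 2 · sup_{v ∈ C, ‖v‖₂ ≤ 1} ⟨v, u − x†⟩ + ε. -/

import Mathlib

open scoped BigOperators

/-- Euclidean norm on `Fin d → ℝ`. -/
noncomputable def euclNorm {d : ℕ} (v : Fin d → ℝ) : ℝ := Real.sqrt (∑ j, v j ^ 2)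

/-- Euclidean inner product on `Fin d → ℝ`. -/
noncomputable def dot {d : ℕ} (u v : Fin d → ℝ) : ℝ := ∑ j, u j * v j

noncomputable def toE {d : ℕ} (v : Fin d → ℝ) : EuclideanSpace ℝ (Fin d) :=
  (WithLp.equiv 2 _).symm v

lemma euclNorm_eq {d : ℕ} (v : Fin d → ℝ) : euclNorm v = ‖toE v‖ := by
  rw [EuclideanSpace.norm_eq]
  simp [euclNorm, toE, sq_abs]

lemma dot_eq {d : ℕ} (u v : Fin d → ℝ) : dot u v = inner ℝ (toE u) (toE v) := by
  simp [dot, toE, PiLp.inner_apply, RCLike.inner_apply, mul_comm]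

lemma toE_sub {d : ℕ} (u v : Fin d → ℝ) : toE (u - v) = toE u - toE v := by
  simp [toE]

lemma toE_smul {d : ℕ} (a : ℝ) (v : Fin d → ℝ) : toE (a • v) = a • toE v := by
  simp [toE]

/-- If `P` is an `ε`-approximate Euclidean projection onto a nonempty closed set `M ∋ x†`
and `C` is the cone generated by `M - x†`, then for every `u`:
`‖P(u) - x†‖ ≤ 2 sup_{v ∈ C, ‖v‖ ≤ 1} ⟨v, u - x†⟩ + ε`. -/
theorem approx_proj_error_bound {d : ℕ} (M : Set (Fin d → ℝ)) (hMne : M.Nonempty)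
    (hMc : IsClosed M) (xdag : Fin d → ℝ) (hxdag : xdag ∈ M)
    (C : Set (Fin d → ℝ))
    (hC : C = {v | ∃ a : ℝ, 0 ≤ a ∧ ∃ z ∈ M, v = a • (z - xdag)})
    (PM P : (Fin d → ℝ) → (Fin d → ℝ))
    (hPM : ∀ u, PM u ∈ M ∧ ∀ z ∈ M, euclNorm (u - PM u) ≤ euclNorm (u - z))
    (ε : ℝ) (hε : 0 ≤ ε) (hP : ∀ u, euclNorm (P u - PM u) ≤ ε) :
    ∀ u : Fin d → ℝ,
      euclNorm (P u - xdag)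
        ≤ 2 * sSup {r : ℝ | ∃ v ∈ C, euclNorm v ≤ 1 ∧ r = dot v (u - xdag)} + ε := by
  intro u
  set S : Set ℝ := {r : ℝ | ∃ v ∈ C, euclNorm v ≤ 1 ∧ r = dot v (u - xdag)} with hS
  set y := PM u with hy
  have hyM : y ∈ M := (hPM u).1
  have hmin : euclNorm (u - y) ≤ euclNorm (u - xdag) := (hPM u).2 xdag hxdag
  set w : EuclideanSpace ℝ (Fin d) := toE (u - xdag) with hw
  set p : EuclideanSpace ℝ (Fin d) := toE (y - xdag) with hp
  -- 0 ∈ C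
  have h0C : (0 : Fin d → ℝ) ∈ C := by
    rw [hC]; exact ⟨0, le_refl 0, xdag, hxdag, by simp⟩
  have h0S : (0 : ℝ) ∈ S := by
    refine ⟨0, h0C, ?_, ?_⟩
    · simp [euclNorm]
    · simp [dot]
  have hSne : S.Nonempty := ⟨0, h0S⟩
  have hSbdd : BddAbove S := by
    refine ⟨‖w‖, ?_⟩
    rintro r ⟨v, hvC, hv1, rfl⟩
    calc dot v (u - xdag) = inner ℝ (toE v) w := by rw [dot_eq]
    _ ≤ ‖toE v‖ * ‖w‖ := real_inner_le_norm _ _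
    _ ≤ 1 * ‖w‖ := by
        apply mul_le_mul_of_nonneg_right _ (norm_nonneg _)
        rw [← euclNorm_eq]; exact hv1
    _ = ‖w‖ := one_mul _
  have hsSup0 : (0 : ℝ) ≤ sSup S := le_csSup hSbdd h0S
  -- key: ‖p‖^2 ≤ 2 * ⟪p, w⟫
  have hkey : ‖p‖ ^ 2 ≤ 2 * (inner ℝ p w : ℝ) := by
    have h1 : ‖w - p‖ ≤ ‖w‖ := by
      have : toE (u - y) = w - p := by
        rw [hw, hp, ← toE_sub]; ring_nf
      rw [← this, ← euclNorm_eq, ← euclNorm_eq]; exact hmin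
    have h2 : ‖w - p‖ ^ 2 ≤ ‖w‖ ^ 2 :=
      pow_le_pow_left₀ (norm_nonneg _) h1 2
    have h3 : ‖w - p‖ ^ 2 = ‖w‖ ^ 2 - 2 * (inner ℝ w p : ℝ) + ‖p‖ ^ 2 :=
      norm_sub_sq_real w p
    nlinarith [h2, h3, real_inner_comm p w]
  -- ‖p‖ ≤ 2 * sSup S
  have hmain : ‖p‖ ≤ 2 * sSup S := by
    rcases eq_or_ne p 0 with hp0 | hp0
    · rw [hp0, norm_zero]; linarith
    · have hpc : (0 : ℝ) < ‖p‖ := norm_pos_iff.mpr hp0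
      set c := ‖p‖ with hc
      have hvS : c⁻¹ * (inner ℝ p w : ℝ) ∈ S := by
        refine ⟨c⁻¹ • (y - xdag), ?_, ?_, ?_⟩
        · rw [hC]
          exact ⟨c⁻¹, by positivity, y, hyM, rfl⟩
        · rw [euclNorm_eq, toE_smul, norm_smul]
          rw [← hp, ← hc]
          rw [Real.norm_eq_abs, abs_of_pos (by positivity)]
          rw [inv_mul_cancel₀ (ne_of_gt hpc)]
        · rw [dot_eq, toE_smul, ← hp, ← hw, inner_smul_left]
          simp
      have h4 : c⁻¹ * (inner ℝ p w : ℝ) ≤ sSup S := le_csSup hSbdd hvS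
      have h5 : c / 2 ≤ c⁻¹ * (inner ℝ p w : ℝ) := by
        have : c ^ 2 ≤ 2 * (inner ℝ p w : ℝ) := hkey
        rw [div_le_iff₀ (by norm_num : (0:ℝ) < 2)] at *
        have := mul_le_mul_of_nonneg_left this (le_of_lt (inv_pos.mpr hpc))
        calc c = c⁻¹ * c ^ 2 := by field_simp
        _ ≤ c⁻¹ * (2 * (inner ℝ p w : ℝ)) := this
        _ = c⁻¹ * (inner ℝ p w : ℝ) * 2 := by ring
      linarith
  -- triangle inequality
  have htri : euclNorm (P u - xdag) ≤ ε + ‖p‖ := by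
    have : toE (P u - xdag) = toE (P u - y) + p := by
      rw [hp, toE_sub, toE_sub, toE_sub]; abel
    rw [euclNorm_eq, this]
    calc ‖toE (P u - y) + p‖ ≤ ‖toE (P u - y)‖ + ‖p‖ := norm_add_le _ _
    _ ≤ ε + ‖p‖ := by
        apply add_le_add_left
        rw [← euclNorm_eq]; exact hP u
  linarith
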